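/- Let (N,v) be a convex game (v supermodular, v(∅)=0), let x be a core element, and let ∅ ≠ S ⊊ N. Then the reduced game v'(T) := max over Q ⊆ N\S of (v(T∪Q) − x(Q)), for T ⊆ S, is supermodular on subsets of S: v'(T)+v'(R) ≤ v'(T∪R)+v'(T∩R) for all T,R ⊆ S. -/
import Mathlib


open Finset

theorem reduced_game_supermodular {α : Type*} [Fintype α] [DecidableEq α]
    (v : Finset α → ℝ) (h0 : v ∅ = 0)
    (hsuper : ∀ S T : Finset α, v S + v T ≤ v (S ∩ T) + v (S ∪ T))
    (x : α → ℝ)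
    (hcore : ∀ R : Finset α, v R ≤ ∑ i ∈ R, x i)
    (hN : ∑ i, x i = v Finset.univ)
    (S : Finset α) (hSne : S.Nonempty) (hSproper : S ≠ Finset.univ) :
    ∀ T R : Finset α, T ⊆ S → R ⊆ S →
      (Sᶜ.powerset.sup' (Finset.powerset_nonempty _)
          (fun Q => v (T ∪ Q) - ∑ i ∈ Q, x i))
        + (Sᶜ.powerset.sup' (Finset.powerset_nonempty _)
          (fun Q => v (R ∪ Q) - ∑ i ∈ Q, x i))
      ≤ (Sᶜ.powerset.sup' (Finset.powerset_nonempty _)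
          (fun Q => v ((T ∪ R) ∪ Q) - ∑ i ∈ Q, x i))
        + (Sᶜ.powerset.sup' (Finset.powerset_nonempty _)
          (fun Q => v ((T ∩ R) ∪ Q) - ∑ i ∈ Q, x i)) := by
  intro T R hT hR
  obtain ⟨Q₁, hQ₁mem, hQ₁⟩ := Finset.exists_mem_eq_sup' (Finset.powerset_nonempty Sᶜ)
    (fun Q => v (T ∪ Q) - ∑ i ∈ Q, x i)
  obtain ⟨Q₂, hQ₂mem, hQ₂⟩ := Finset.exists_mem_eq_sup' (Finset.powerset_nonempty Sᶜ)
    (fun Q => v (R ∪ Q) - ∑ i ∈ Q, x i)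
  rw [Finset.mem_powerset] at hQ₁mem hQ₂mem
  rw [hQ₁, hQ₂]
  have hunion : (T ∪ Q₁) ∪ (R ∪ Q₂) = (T ∪ R) ∪ (Q₁ ∪ Q₂) := by
    ext a; simp [Finset.mem_union]; tauto
  have hinter : (T ∪ Q₁) ∩ (R ∪ Q₂) = (T ∩ R) ∪ (Q₁ ∩ Q₂) := by
    ext a
    simp only [Finset.mem_inter, Finset.mem_union]
    constructor
    · rintro ⟨h1 | h1, h2 | h2⟩
      · exact Or.inl ⟨h1, h2⟩
      · exact absurd (hQ₂mem h2) (by simpa using hT h1)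
      · exact absurd (hQ₁mem h1) (by simpa using hR h2)
      · exact Or.inr ⟨h1, h2⟩
    · rintro (⟨h1, h2⟩ | ⟨h1, h2⟩) <;> exact ⟨by tauto, by tauto⟩
  have hsum : (∑ i ∈ Q₁, x i) + (∑ i ∈ Q₂, x i)
      = (∑ i ∈ Q₁ ∪ Q₂, x i) + (∑ i ∈ Q₁ ∩ Q₂, x i) :=
    (Finset.sum_union_inter).symm
  have key := hsuper (T ∪ Q₁) (R ∪ Q₂)
  rw [hunion, hinter] at key
  have h1 : v ((T ∪ R) ∪ (Q₁ ∪ Q₂)) - ∑ i ∈ Q₁ ∪ Q₂, x i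
      ≤ Sᶜ.powerset.sup' (Finset.powerset_nonempty _)
        (fun Q => v ((T ∪ R) ∪ Q) - ∑ i ∈ Q, x i) :=
    Finset.le_sup' (fun Q => v ((T ∪ R) ∪ Q) - ∑ i ∈ Q, x i) (Finset.mem_powerset.mpr (Finset.union_subset hQ₁mem hQ₂mem))
  have h2 : v ((T ∩ R) ∪ (Q₁ ∩ Q₂)) - ∑ i ∈ Q₁ ∩ Q₂, x i
      ≤ Sᶜ.powerset.sup' (Finset.powerset_nonempty _)
        (fun Q => v ((T ∩ R) ∪ Q) - ∑ i ∈ Q, x i) :=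
    Finset.le_sup' (fun Q => v ((T ∩ R) ∪ Q) - ∑ i ∈ Q, x i) (Finset.mem_powerset.mpr
      ((Finset.inter_subset_left).trans hQ₁mem))
  linarith
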